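/- Let θ : ℝ → ℝ satisfy θ'(s) = (π/2 − θ(s))·sin θ(s) for all s, with θ(0) = θ₀ ∈ (0, π) and θ₀ ≠ π/2, and let y, z : ℝ → ℝ satisfy y(0) = z(0) = 0, z'(s) = sin θ(s), y'(s) = e^{z(s)}·cos θ(s). Then as s → +∞: θ(s) → π/2; there exists a nonzero real constant C with e^{s}·(π/2 − θ(s)) → C; z(s) − s converges to a finite limit; and y(s)/s converges to a finite nonzero limit (so the profile curve is asymptotic to a straight line y = C₁ z + C₀ with C₁ ≠ 0). -/

import Mathlib

open Real Filter Topology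

/-- Helper: monotone on a convex set from `HasDerivAt` at interior points. -/
private lemma my_monoOn {f f' : ℝ → ℝ} {D : Set ℝ} (hD : Convex ℝ D)
    (hc : ContinuousOn f D) (hd : ∀ x ∈ interior D, HasDerivAt f (f' x) x)
    (h0 : ∀ x ∈ interior D, 0 ≤ f' x) : MonotoneOn f D :=
  monotoneOn_of_hasDerivWithinAt_nonneg hD hc
    (fun x hx => (hd x hx).hasDerivWithinAt) h0

private lemma my_antiOn {f f' : ℝ → ℝ} {D : Set ℝ} (hD : Convex ℝ D)
    (hc : ContinuousOn f D) (hd : ∀ x ∈ interior D, HasDerivAt f (f' x) x)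
    (h0 : ∀ x ∈ interior D, f' x ≤ 0) : AntitoneOn f D :=
  antitoneOn_of_hasDerivWithinAt_nonpos hD hc
    (fun x hx => (hd x hx).hasDerivWithinAt) h0

/-- Cesàro-type lemma: if `f' → M` at `+∞` then `f s / s → M`. -/
private lemma my_div_lim {f f' : ℝ → ℝ} (hf : ∀ s, HasDerivAt f (f' s) s) {M : ℝ}
    (h : Tendsto f' atTop (𝓝 M)) : Tendsto (fun s => f s / s) atTop (𝓝 M) := by
  rw [Metric.tendsto_atTop] at h ⊢
  intro ε hε
  obtain ⟨N₀, hN₀⟩ := h (ε / 3) (by linarith)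
  set g : ℝ → ℝ := fun s => f s - M * s with hg_def
  have hg : ∀ s, HasDerivAt g (f' s - M) s := by
    intro s
    have h1 : HasDerivAt (fun s : ℝ => M * s) (M * 1) s := (hasDerivAt_id s).const_mul M
    exact (hf s).sub (by simpa using h1)
  have hbound : ∀ s, s ≥ N₀ → |g s - g N₀| ≤ ε / 3 * (s - N₀) := by
    intro s hs
    have hb := Convex.norm_image_sub_le_of_norm_hasDerivWithin_le
      (f := g) (f' := fun t => f' t - M) (s := Set.Ici N₀) (C := ε / 3)
      (fun x _ => (hg x).hasDerivWithinAt)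
      (fun x hx => by
        have hd := hN₀ x hx
        rw [Real.dist_eq] at hd
        simpa [Real.norm_eq_abs] using hd.le)
      (convex_Ici N₀) (Set.self_mem_Ici) hs
    rw [Real.norm_eq_abs, Real.norm_eq_abs] at hb
    calc |g s - g N₀| ≤ ε / 3 * |s - N₀| := hb
      _ = ε / 3 * (s - N₀) := by rw [abs_of_nonneg (by linarith)]
  refine ⟨max (max N₀ 1) ((3 * |g N₀| + |ε * N₀| + 3) / ε), fun s hs => ?_⟩
  have hs₀ : s ≥ N₀ := le_trans (le_max_of_le_left (le_max_left _ _)) hs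
  have hs₁ : (1:ℝ) ≤ s := le_trans (le_max_of_le_left (le_max_right _ _)) hs
  have hs₂ : (3 * |g N₀| + |ε * N₀| + 3) / ε ≤ s := le_trans (le_max_right _ _) hs
  have hspos : (0:ℝ) < s := by linarith
  have hεs : 3 * |g N₀| + |ε * N₀| + 3 ≤ ε * s := by
    rw [div_le_iff₀ hε] at hs₂
    linarith
  rw [Real.dist_eq]
  have key : |f s - M * s| < ε * s := by
    have h1 := hbound s hs₀
    have h4 : |f s - M * s| ≤ |g N₀| + ε / 3 * (s - N₀) := by
      have h5 : f s - M * s = g N₀ + (g s - g N₀) := by rw [hg_def]; ring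
      rw [h5]
      exact le_trans (abs_add_le _ _) (by linarith)
    have h6 : -(ε * N₀) ≤ |ε * N₀| := neg_le_abs _
    have h7 : (0:ℝ) ≤ |g N₀| := abs_nonneg _
    nlinarith
  have heq : |f s / s - M| = |f s - M * s| / s := by
    rw [show f s / s - M = (f s - M * s) / s from by field_simp, abs_div,
      abs_of_pos hspos]
  rw [heq, div_lt_iff₀ hspos]
  linarith [key]

/-- Core lemma for `u' = -u cos u` with `u 0 ∈ (0, π/2)`. -/
private lemma my_core (u z y : ℝ → ℝ) (hu0 : u 0 ∈ Set.Ioo 0 (π / 2))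
    (hu : ∀ s, HasDerivAt u (-(u s * Real.cos (u s))) s)
    (hz0 : z 0 = 0) (hz : ∀ s, HasDerivAt z (Real.cos (u s)) s)
    (hy : ∀ s, HasDerivAt y (Real.exp (z s) * Real.sin (u s)) s) :
    Tendsto u atTop (𝓝 0) ∧
    (∃ C : ℝ, 0 < C ∧ Tendsto (fun s => Real.exp s * u s) atTop (𝓝 C)) ∧
    (∃ L : ℝ, Tendsto (fun s => z s - s) atTop (𝓝 L)) ∧
    (∃ M : ℝ, 0 < M ∧ Tendsto (fun s => y s / s) atTop (𝓝 M)) := by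
  obtain ⟨hu0p, hu0l⟩ := hu0
  have ucont : Continuous u := by
    rw [continuous_iff_continuousAt]; exact fun s => (hu s).continuousAt
  -- Invariance: u stays in (0, π/2) for s ≥ 0
  have hinv : ∀ s : ℝ, 0 ≤ s → u s ∈ Set.Ioo 0 (π / 2) := by
    by_contra hcon
    push_neg at hcon
    obtain ⟨s₁, hs₁0, hs₁⟩ := hcon
    set S : Set ℝ := Set.Icc 0 s₁ ∩ u ⁻¹' (Set.Ioo 0 (π / 2))ᶜ with hS_def
    have hS_closed : IsClosed S :=
      isClosed_Icc.inter (isOpen_Ioo.isClosed_compl.preimage ucont)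
    have hS_ne : S.Nonempty := ⟨s₁, ⟨hs₁0, le_rfl⟩, hs₁⟩
    have hS_bdd : BddBelow S := ⟨0, fun x hx => hx.1.1⟩
    set T := sInf S with hT_def
    have hT_mem : T ∈ S := hS_closed.csInf_mem hS_ne hS_bdd
    have hT0 : 0 ≤ T := hT_mem.1.1
    have hTpos : 0 < T := by
      rcases eq_or_lt_of_le hT0 with h | h
      · exact absurd (Set.mem_Ioo.mpr ⟨hu0p, hu0l⟩) (by rw [← h] at hT_mem; exact hT_mem.2)
      · exact h
    have hbefore : ∀ t, 0 ≤ t → t < T → u t ∈ Set.Ioo 0 (π / 2) := by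
      intro t ht htT
      by_contra h
      have : t ∈ S := ⟨⟨ht, le_trans htT.le hT_mem.1.2⟩, h⟩
      exact absurd (csInf_le hS_bdd this) (not_le.mpr htT)
    -- u is antitone on [0, T]
    have hanti : AntitoneOn u (Set.Icc 0 T) := by
      apply my_antiOn (convex_Icc 0 T) ucont.continuousOn
        (f' := fun s => -(u s * Real.cos (u s)))
      · intro x hx; exact hu x
      · intro x hx
        rw [interior_Icc] at hx
        have hux := hbefore x hx.1.le hx.2
        have hcos : 0 < Real.cos (u x) :=
          Real.cos_pos_of_mem_Ioo ⟨by linarith [hux.1, Real.pi_pos], hux.2⟩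
        nlinarith [hux.1]
    have hle : u T ≤ u 0 :=
      hanti (Set.left_mem_Icc.mpr hT0) (Set.right_mem_Icc.mpr hT0) hT0
    -- u * exp is monotone on [0, T]
    have hmono : MonotoneOn (fun s => u s * Real.exp s) (Set.Icc 0 T) := by
      apply my_monoOn (convex_Icc 0 T)
        (ucont.mul Real.continuous_exp).continuousOn
        (f' := fun s => Real.exp s * (u s * (1 - Real.cos (u s))))
      · intro x _
        have := (hu x).mul (Real.hasDerivAt_exp x)
        exact this.congr_deriv (by ring)
      · intro x hx
        rw [interior_Icc] at hx
        have hux := hbefore x hx.1.le hx.2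
        have h1 : Real.cos (u x) ≤ 1 := Real.cos_le_one _
        have h2 : 0 < Real.exp x := Real.exp_pos x
        exact mul_nonneg h2.le (mul_nonneg hux.1.le (by linarith))
    have hge : u 0 * Real.exp 0 ≤ u T * Real.exp T :=
      hmono (Set.left_mem_Icc.mpr hT0) (Set.right_mem_Icc.mpr hT0) hT0
    rw [Real.exp_zero, mul_one] at hge
    have hup : 0 < u T := by
      have := Real.exp_pos T
      nlinarith
    have : u T ∉ Set.Ioo 0 (π / 2) := hT_mem.2
    rw [Set.mem_Ioo] at this
    push_neg at this
    have := this hup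
    linarith
  have hupos : ∀ s : ℝ, 0 ≤ s → 0 < u s := fun s hs => (hinv s hs).1
  have huhalf : ∀ s : ℝ, 0 ≤ s → u s < π / 2 := fun s hs => (hinv s hs).2
  have hcosu : ∀ s : ℝ, 0 ≤ s → 0 < Real.cos (u s) := fun s hs =>
    Real.cos_pos_of_mem_Ioo ⟨by linarith [hupos s hs, Real.pi_pos], huhalf s hs⟩
  -- u is antitone on [0, ∞)
  have hanti : AntitoneOn u (Set.Ici 0) := by
    apply my_antiOn (convex_Ici 0) ucont.continuousOn
      (f' := fun s => -(u s * Real.cos (u s)))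
    · intro x _; exact hu x
    · intro x hx
      rw [interior_Ici] at hx
      nlinarith [hupos x hx.le, hcosu x hx.le]
  have hle0 : ∀ s : ℝ, 0 ≤ s → u s ≤ u 0 := fun s hs =>
    hanti Set.self_mem_Ici hs hs
  set c := Real.cos (u 0) with hc_def
  have hcpos : 0 < c := hcosu 0 le_rfl
  have hcos_ge : ∀ s : ℝ, 0 ≤ s → c ≤ Real.cos (u s) := by
    intro s hs
    exact Real.cos_le_cos_of_nonneg_of_le_pi (hupos s hs).le
      (by linarith [hu0l, Real.pi_pos]) (hle0 s hs)
  -- decay: u s ≤ u 0 * exp (-(c * s)) for s ≥ 0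
  have hdecay : ∀ s : ℝ, 0 ≤ s → u s ≤ u 0 * Real.exp (-(c * s)) := by
    have hp : AntitoneOn (fun s => u s * Real.exp (c * s)) (Set.Ici 0) := by
      apply my_antiOn (convex_Ici 0)
        (ucont.mul (Real.continuous_exp.comp (continuous_const.mul continuous_id))).continuousOn
        (f' := fun s => Real.exp (c * s) * (u s * (c - Real.cos (u s))))
      · intro x _
        have h1 : HasDerivAt (fun s : ℝ => Real.exp (c * s)) (Real.exp (c * x) * c) x := by
          have := (Real.hasDerivAt_exp (c * x)).comp x
            ((hasDerivAt_id x).const_mul c)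
          simpa [Function.comp_def] using this
        have := (hu x).mul h1
        exact this.congr_deriv (by ring)
      · intro x hx
        rw [interior_Ici] at hx
        have h1 := hcos_ge x hx.le
        have h2 := hupos x hx.le
        have h3 := (Real.exp_pos (c * x)).le
        have h4 : 0 ≤ Real.exp (c * x) * (u x * (Real.cos (u x) - c)) :=
          mul_nonneg h3 (mul_nonneg h2.le (by linarith))
        nlinarith [h4]
    intro s hs
    have := hp Set.self_mem_Ici hs hs
    simp only [mul_zero, Real.exp_zero, mul_one] at this
    calc u s = u s * Real.exp (c * s) * Real.exp (-(c * s)) := by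
          rw [mul_assoc, ← Real.exp_add, add_neg_cancel, Real.exp_zero, mul_one]
      _ ≤ u 0 * Real.exp (-(c * s)) :=
          mul_le_mul_of_nonneg_right this (Real.exp_pos _).le
  -- u → 0
  have hu_lim : Tendsto u atTop (𝓝 0) := by
    have hlim : Tendsto (fun s : ℝ => u 0 * Real.exp (-(c * s))) atTop (𝓝 0) := by
      have he : Tendsto (fun s : ℝ => Real.exp (-(c * s))) atTop (𝓝 0) := by
        apply Real.tendsto_exp_atBot.comp
        exact tendsto_neg_atBot_iff.mpr (Tendsto.const_mul_atTop hcpos tendsto_id)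
      simpa using he.const_mul (u 0)
    apply tendsto_of_tendsto_of_tendsto_of_le_of_le' tendsto_const_nhds hlim
    · filter_upwards [eventually_ge_atTop (0:ℝ)] with s hs
      exact (hupos s hs).le
    · filter_upwards [eventually_ge_atTop (0:ℝ)] with s hs
      exact hdecay s hs
  -- φ := log (u s) + s converges
  set φ : ℝ → ℝ := fun s => Real.log (u s) + s with hφ_def
  have hφcont : ContinuousOn φ (Set.Ici 0) := by
    intro x hx
    apply ContinuousAt.continuousWithinAt
    exact ((Real.continuousAt_log (hupos x hx).ne').comp (ucont.continuousAt)).add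
      continuousAt_id
  have hφd : ∀ x : ℝ, 0 < x → HasDerivAt φ (1 - Real.cos (u x)) x := by
    intro x hx
    have h1 : HasDerivAt (fun s => Real.log (u s))
        (-(u x * Real.cos (u x)) / u x) x := (hu x).log (hupos x hx.le).ne'
    have h2 := h1.add (hasDerivAt_id x)
    exact h2.congr_deriv (by rw [neg_div, mul_div_cancel_left₀ _ (hupos x hx.le).ne']; ring)
  have hφmono : MonotoneOn φ (Set.Ici 0) := by
    apply my_monoOn (convex_Ici 0) hφcont (f' := fun x => 1 - Real.cos (u x))
    · intro x hx; rw [interior_Ici] at hx; exact hφd x hx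
    · intro x hx; linarith [Real.cos_le_one (u x)]
  -- Bound: φ is bounded above via auxiliary antitone ψ
  set B := u 0 ^ 2 / (4 * c) with hB_def
  have hψ : AntitoneOn (fun s => φ s + B * Real.exp (-(2 * c * s))) (Set.Ici 0) := by
    apply my_antiOn (convex_Ici 0)
      (hφcont.add (Continuous.continuousOn (continuous_const.mul
        (Real.continuous_exp.comp ((continuous_const.mul continuous_id).neg)))))
      (f' := fun x => (1 - Real.cos (u x)) + B * (Real.exp (-(2 * c * x)) * (-(2 * c))))
    · intro x hx
      rw [interior_Ici] at hx
      have h1 : HasDerivAt (fun s : ℝ => Real.exp (-(2 * c * s)))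
          (Real.exp (-(2 * c * x)) * (-(2 * c))) x := by
        have := (Real.hasDerivAt_exp (-(2 * c * x))).comp x
          (((hasDerivAt_id x).const_mul (2 * c)).neg)
        simpa [Function.comp_def] using this
      exact (hφd x hx).add (h1.const_mul B)
    · intro x hx
      rw [interior_Ici] at hx
      have h1 : 1 - Real.cos (u x) ≤ u x ^ 2 / 2 := by
        have := Real.one_sub_sq_div_two_le_cos (x := u x)
        linarith
      have h2 : u x ^ 2 ≤ u 0 ^ 2 * Real.exp (-(2 * c * x)) := by
        have h3 := hdecay x hx.le
        have h4 := hupos x hx.le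
        have h5 : u x ^ 2 ≤ (u 0 * Real.exp (-(c * x))) ^ 2 := by nlinarith
        calc u x ^ 2 ≤ (u 0 * Real.exp (-(c * x))) ^ 2 := h5
          _ = u 0 ^ 2 * Real.exp (-(2 * c * x)) := by
            rw [mul_pow, ← Real.exp_nat_mul]
            ring_nf
      have h6 : B * (Real.exp (-(2 * c * x)) * (-(2 * c))) =
          -(u 0 ^ 2 / 2 * Real.exp (-(2 * c * x))) := by
        rw [hB_def]; field_simp; ring
      rw [h6]
      linarith
  have hφbdd : ∀ s : ℝ, 0 ≤ s → φ s ≤ φ 0 + B := by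
    intro s hs
    have h1 := hψ Set.self_mem_Ici hs hs
    simp only [mul_zero, neg_zero, Real.exp_zero, mul_one] at h1
    have h2 : 0 ≤ B * Real.exp (-(2 * c * s)) := by
      apply mul_nonneg _ (Real.exp_pos _).le
      rw [hB_def]; positivity
    linarith
  -- φ converges
  set F : ℝ → ℝ := fun s => φ (max s 0) with hF_def
  have hFmono : Monotone F := fun a b hab =>
    hφmono (Set.mem_Ici.mpr (le_max_right a 0)) (Set.mem_Ici.mpr (le_max_right b 0))
      (max_le_max hab le_rfl)
  have hFbdd : BddAbove (Set.range F) := by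
    refine ⟨φ 0 + B, fun x hx => ?_⟩
    obtain ⟨s, rfl⟩ := hx
    exact hφbdd (max s 0) (le_max_right s 0)
  have hFlim := tendsto_atTop_ciSup hFmono hFbdd
  set ℓ := ⨆ s, F s with hℓ_def
  have hφlim : Tendsto φ atTop (𝓝 ℓ) := by
    apply hFlim.congr'
    filter_upwards [eventually_ge_atTop (0:ℝ)] with s hs
    rw [hF_def]; simp [max_eq_left hs]
  -- e^s u s → C
  have hexpu : Tendsto (fun s => Real.exp s * u s) atTop (𝓝 (Real.exp ℓ)) := by
    have h1 : Tendsto (fun s => Real.exp (φ s)) atTop (𝓝 (Real.exp ℓ)) :=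
      (Real.continuous_exp.tendsto ℓ).comp hφlim
    apply h1.congr'
    filter_upwards [eventually_ge_atTop (0:ℝ)] with s hs
    rw [hφ_def]
    simp only [Real.exp_add, Real.exp_log (hupos s hs)]
    ring
  -- z s - s converges: φ + (z - s) is constant on [0, ∞)
  have hG : ∀ s : ℝ, 0 ≤ s → φ s + (z s - s) = φ 0 := by
    have hGd : ∀ x : ℝ, 0 < x →
        HasDerivAt (fun s => φ s + (z s - s)) 0 x := by
      intro x hx
      have h1 := (hφd x hx).add ((hz x).sub (hasDerivAt_id x))
      exact h1.congr_deriv (by ring)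
    have hGc : ContinuousOn (fun s => φ s + (z s - s)) (Set.Ici 0) := by
      apply hφcont.add
      apply Continuous.continuousOn
      have hzc : Continuous z := by
        rw [continuous_iff_continuousAt]; exact fun s => (hz s).continuousAt
      exact hzc.sub continuous_id
    have hm : MonotoneOn (fun s => φ s + (z s - s)) (Set.Ici 0) :=
      my_monoOn (convex_Ici 0) hGc (f' := fun _ => 0)
        (fun x hx => hGd x (by rwa [interior_Ici] at hx)) (fun x _ => le_rfl)
    have ha : AntitoneOn (fun s => φ s + (z s - s)) (Set.Ici 0) :=
      my_antiOn (convex_Ici 0) hGc (f' := fun _ => 0)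
        (fun x hx => hGd x (by rwa [interior_Ici] at hx)) (fun x _ => le_rfl)
    intro s hs
    have h1 := hm Set.self_mem_Ici hs hs
    have h2 := ha Set.self_mem_Ici hs hs
    simp only [hz0, sub_zero, sub_self, add_zero] at h1 h2
    linarith
  have hζlim : Tendsto (fun s => z s - s) atTop (𝓝 (φ 0 - ℓ)) := by
    have h1 : Tendsto (fun s => φ 0 - φ s) atTop (𝓝 (φ 0 - ℓ)) :=
      tendsto_const_nhds.sub hφlim
    apply h1.congr'
    filter_upwards [eventually_ge_atTop (0:ℝ)] with s hs
    linarith [hG s hs]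
  -- y' → M
  have hsinc : Tendsto (fun s => Real.sin (u s) / u s) atTop (𝓝 1) := by
    have h1 : Tendsto (fun x : ℝ => Real.sin x / x) (𝓝[≠] (0:ℝ)) (𝓝 1) := by
      have h2 := hasDerivAt_iff_tendsto_slope.mp (Real.hasDerivAt_sin 0)
      rw [Real.cos_zero] at h2
      apply h2.congr
      intro x
      rw [slope_def_field, Real.sin_zero, sub_zero, sub_zero]
    have h3 : Tendsto u atTop (𝓝[≠] (0:ℝ)) := by
      rw [tendsto_nhdsWithin_iff]
      refine ⟨hu_lim, ?_⟩
      filter_upwards [eventually_ge_atTop (0:ℝ)] with s hs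
      exact (hupos s hs).ne'
    exact h1.comp h3
  have hy'lim : Tendsto (fun s => Real.exp (z s) * Real.sin (u s)) atTop
      (𝓝 (Real.exp (φ 0 - ℓ) * (Real.exp ℓ * 1))) := by
    have h1 : Tendsto (fun s => Real.exp (z s - s) *
        ((Real.exp s * u s) * (Real.sin (u s) / u s))) atTop
        (𝓝 (Real.exp (φ 0 - ℓ) * (Real.exp ℓ * 1))) :=
      ((Real.continuous_exp.tendsto _).comp hζlim).mul (hexpu.mul hsinc)
    apply h1.congr'
    filter_upwards [eventually_ge_atTop (0:ℝ)] with s hs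
    have h2 : u s ≠ 0 := (hupos s hs).ne'
    rw [Real.exp_sub]
    field_simp
  refine ⟨hu_lim, ⟨Real.exp ℓ, Real.exp_pos ℓ, hexpu⟩, ⟨φ 0 - ℓ, hζlim⟩,
    ⟨Real.exp (φ 0 - ℓ) * (Real.exp ℓ * 1), by positivity, ?_⟩⟩
  exact my_div_lim hy hy'lim

theorem stmt15 (θ₀ : ℝ) (hθ₀ : θ₀ ∈ Set.Ioo 0 π) (hθ₀' : θ₀ ≠ π / 2)
    (θ y z : ℝ → ℝ) (hθ0 : θ 0 = θ₀)
    (hθ : ∀ s : ℝ, HasDerivAt θ ((π / 2 - θ s) * Real.sin (θ s)) s)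
    (hy0 : y 0 = 0) (hz0 : z 0 = 0)
    (hz : ∀ s : ℝ, HasDerivAt z (Real.sin (θ s)) s)
    (hy : ∀ s : ℝ, HasDerivAt y (Real.exp (z s) * Real.cos (θ s)) s) :
    Tendsto θ atTop (𝓝 (π / 2)) ∧
    (∃ C : ℝ, C ≠ 0 ∧
      Tendsto (fun s => Real.exp s * (π / 2 - θ s)) atTop (𝓝 C)) ∧
    (∃ L : ℝ, Tendsto (fun s => z s - s) atTop (𝓝 L)) ∧
    (∃ M : ℝ, M ≠ 0 ∧ Tendsto (fun s => y s / s) atTop (𝓝 M)) := by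
  obtain ⟨hθ₀p, hθ₀l⟩ := hθ₀
  rcases lt_or_gt_of_ne hθ₀' with hlt | hgt
  · -- θ₀ < π/2 : take u = π/2 - θ
    have hu : ∀ s, HasDerivAt (fun s => π / 2 - θ s)
        (-((π / 2 - θ s) * Real.cos (π / 2 - θ s))) s := by
      intro s
      have h1 := (hθ s).const_sub (π / 2)
      have h2 : -((π / 2 - θ s) * Real.cos (π / 2 - θ s)) =
          -((π / 2 - θ s) * Real.sin (θ s)) := by
        rw [Real.cos_pi_div_two_sub]
      rw [h2]
      exact h1
    have hu0 : (fun s => π / 2 - θ s) 0 ∈ Set.Ioo 0 (π / 2) := by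
      simp only [hθ0]
      exact ⟨by linarith, by linarith⟩
    have hz' : ∀ s, HasDerivAt z (Real.cos ((fun s => π / 2 - θ s) s)) s := by
      intro s
      have h2 : Real.cos ((fun s => π / 2 - θ s) s) = Real.sin (θ s) :=
        Real.cos_pi_div_two_sub _
      rw [h2]
      exact hz s
    have hy' : ∀ s, HasDerivAt y
        (Real.exp (z s) * Real.sin ((fun s => π / 2 - θ s) s)) s := by
      intro s
      have h2 : Real.sin ((fun s => π / 2 - θ s) s) = Real.cos (θ s) :=
        Real.sin_pi_div_two_sub _
      rw [h2]
      exact hy s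
    obtain ⟨h1, ⟨C, hC, h2⟩, ⟨L, h3⟩, ⟨M, hM, h4⟩⟩ :=
      my_core (fun s => π / 2 - θ s) z y hu0 hu hz0 hz' hy'
    refine ⟨?_, ⟨C, hC.ne', h2⟩, ⟨L, h3⟩, ⟨M, hM.ne', h4⟩⟩
    have h5 : Tendsto (fun s => π / 2 - (π / 2 - θ s)) atTop (𝓝 (π / 2 - 0)) :=
      tendsto_const_nhds.sub h1
    rw [sub_zero] at h5
    apply h5.congr
    intro s
    ring
  · -- θ₀ > π/2 : take u = θ - π/2 and ỹ = -y
    have hcos : ∀ s, Real.cos (θ s - π / 2) = Real.sin (θ s) := by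
      intro s
      rw [show θ s - π / 2 = -(π / 2 - θ s) from by ring, Real.cos_neg,
        Real.cos_pi_div_two_sub]
    have hsin : ∀ s, Real.sin (θ s - π / 2) = -Real.cos (θ s) := by
      intro s
      rw [show θ s - π / 2 = -(π / 2 - θ s) from by ring, Real.sin_neg,
        Real.sin_pi_div_two_sub]
    have hu : ∀ s, HasDerivAt (fun s => θ s - π / 2)
        (-((θ s - π / 2) * Real.cos (θ s - π / 2))) s := by
      intro s
      have h1 := (hθ s).sub_const (π / 2)
      have h2 : -((θ s - π / 2) * Real.cos (θ s - π / 2)) =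
          (π / 2 - θ s) * Real.sin (θ s) := by
        rw [hcos s]; ring
      rw [h2]
      exact h1
    have hu0 : (fun s => θ s - π / 2) 0 ∈ Set.Ioo 0 (π / 2) := by
      simp only [hθ0]
      exact ⟨by linarith, by linarith⟩
    have hz' : ∀ s, HasDerivAt z (Real.cos ((fun s => θ s - π / 2) s)) s := by
      intro s
      have h2 : Real.cos ((fun s => θ s - π / 2) s) = Real.sin (θ s) := hcos s
      rw [h2]
      exact hz s
    have hy' : ∀ s, HasDerivAt (fun t => -(y t))
        (Real.exp (z s) * Real.sin ((fun s => θ s - π / 2) s)) s := by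
      intro s
      have h1 := (hy s).neg
      have h2 : Real.exp (z s) * Real.sin ((fun s => θ s - π / 2) s) =
          -(Real.exp (z s) * Real.cos (θ s)) := by
        show Real.exp (z s) * Real.sin (θ s - π / 2) = _
        rw [hsin s]; ring
      rw [h2]
      exact h1
    obtain ⟨h1, ⟨C, hC, h2⟩, ⟨L, h3⟩, ⟨M, hM, h4⟩⟩ :=
      my_core (fun s => θ s - π / 2) z (fun t => -(y t)) hu0 hu hz0 hz' hy'
    refine ⟨?_, ⟨-C, neg_ne_zero.mpr hC.ne', ?_⟩, ⟨L, h3⟩,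
      ⟨-M, neg_ne_zero.mpr hM.ne', ?_⟩⟩
    · have h5 : Tendsto (fun s => (θ s - π / 2) + π / 2) atTop (𝓝 (0 + π / 2)) :=
        h1.add tendsto_const_nhds
      rw [zero_add] at h5
      apply h5.congr
      intro s
      ring
    · have h5 := h2.neg
      apply h5.congr
      intro s
      show -(Real.exp s * (θ s - π / 2)) = _
      ring
    · have h5 := h4.neg
      apply h5.congr
      intro s
      show -(-(y s) / s) = _
      ring
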